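/- arXiv:1806.08411 — 4 statements merged into one kernel-verified Lean document; each statement's English description precedes it below -/
import Mathlib

section
/- The series ∑_{n≥0} (-1)^n (4n+1) / (4(n+1)(1-2n)) · (C(2n,n)/4^n)^3 equals 1/π. -/
open Filter Finset Topology

noncomputable def aa (n : ℕ) : ℝ := (Nat.centralBinom n : ℝ) / 4 ^ n

noncomputable def tt (n : ℕ) : ℝ :=
  ((-1 : ℝ) ^ n * (4 * n + 1) / (4 * (n + 1) * (1 - 2 * n))) *
      ((Nat.centralBinom n : ℝ) / 4 ^ n) ^ 3

lemma tt_eq (n : ℕ) : tt n = ((-1 : ℝ) ^ n * (4 * n + 1) / (4 * (n + 1) * (1 - 2 * n))) * aa n ^ 3 := rfl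

lemma aa_pos (n : ℕ) : 0 < aa n := by
  unfold aa
  have h := Nat.centralBinom_pos n
  have : (0:ℝ) < (Nat.centralBinom n : ℝ) := by exact_mod_cast h
  positivity

lemma aa_zero : aa 0 = 1 := by simp [aa]

lemma aa_one : aa 1 = 1/2 := by
  simp [aa, Nat.centralBinom]
  norm_num [Nat.choose]

lemma aa_succ (n : ℕ) : aa (n+1) = aa n * ((2*n+1)/(2*n+2)) := by
  have h := Nat.succ_mul_centralBinom_succ n
  have h' : ((n:ℝ)+1) * (Nat.centralBinom (n+1) : ℝ) = 2*(2*n+1) * (Nat.centralBinom n : ℝ) := by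
    exact_mod_cast h
  unfold aa
  rw [pow_succ]
  have h4 : (4:ℝ)^n ≠ 0 := by positivity
  have hn : ((n:ℝ)+1) ≠ 0 := by positivity
  field_simp
  nlinarith [h', pow_pos (show (0:ℝ)<4 by norm_num) n]

lemma aa_sq_mul_le (n : ℕ) : aa n ^ 2 * ((n:ℝ)+1) ≤ 1 := by
  induction n with
  | zero => simp [aa_zero]
  | succ n ih =>
    rw [aa_succ]
    have hp := aa_pos n
    push_cast
    have h1 : (0:ℝ) < 2*n+2 := by positivity
    rw [mul_pow, div_pow]
    rw [show aa n ^ 2 * ((2 * (n:ℝ) + 1) ^ 2 / (2 * (n:ℝ) + 2) ^ 2) * ((n:ℝ) + 1 + 1)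
        = aa n ^ 2 * ((2 * (n:ℝ) + 1) ^ 2 * ((n:ℝ) + 1 + 1)) / (2 * (n:ℝ) + 2) ^ 2 by ring]
    rw [div_le_one (by positivity)]
    nlinarith [sq_nonneg (aa n), sq_nonneg ((n:ℝ))]

lemma aa_le_one (n : ℕ) : aa n ≤ 1 := by
  have h := aa_sq_mul_le n
  have hp := aa_pos n
  nlinarith [sq_nonneg (aa n - 1)]

lemma tt_bound (n : ℕ) : ‖tt n‖ ≤ 2 / ((n:ℝ)+1)^2 := by
  rw [tt_eq, Real.norm_eq_abs]
  match n with
  | 0 => simp [aa_zero]; norm_num [abs_le]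
  | (m+1) =>
    have hp := aa_pos (m+1)
    have h1 := aa_le_one (m+1)
    have h2 := aa_sq_mul_le (m+1)
    rw [abs_mul, abs_div, abs_mul, abs_pow, abs_neg, abs_one, one_pow, one_mul]
    push_cast
    have e1 : |4*((m:ℝ)+1)+1| = 4*(m:ℝ)+5 := by rw [abs_of_pos]; ring_nf; positivity
    have e2 : |4*((m:ℝ)+1+1)*(1-2*((m:ℝ)+1))| = 4*((m:ℝ)+2)*(2*(m:ℝ)+1) := by
      rw [abs_mul, abs_of_pos (by positivity), abs_of_neg (by have := Nat.cast_nonneg (α:=ℝ) m; linarith : (1:ℝ)-2*((m:ℝ)+1) < 0)]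
      ring
    rw [e1, e2, abs_pow, abs_of_pos hp]
    rw [div_mul_eq_mul_div, div_le_div_iff₀ (by positivity) (by positivity)]
    have h3 : aa (m+1) ^ 3 ≤ 1 / ((m:ℝ)+2) := by
      have : aa (m+1) ^ 3 ≤ aa (m+1) ^2 := by nlinarith
      have h2' : aa (m+1)^2 ≤ 1/((m:ℝ)+2) := by
        rw [le_div_iff₀ (by positivity)]
        calc aa (m+1)^2 * ((m:ℝ)+2) = aa (m+1)^2 * (((m+1:ℕ):ℝ)+1) := by push_cast; ring
          _ ≤ 1 := aa_sq_mul_le (m+1)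
      linarith
    calc (4*(m:ℝ)+5) * aa (m+1)^3 * ((m:ℝ)+1+1)^2
        ≤ (4*(m:ℝ)+5) * (1/((m:ℝ)+2)) * ((m:ℝ)+2)^2 := by
          have hmn : (0:ℝ) ≤ (m:ℝ) := Nat.cast_nonneg m
          have : ((m:ℝ)+1+1)^2 = ((m:ℝ)+2)^2 := by ring
          rw [this]
          apply mul_le_mul_of_nonneg_right _ (by positivity)
          apply mul_le_mul_of_nonneg_left h3 (by positivity)
      _ = (4*(m:ℝ)+5) * ((m:ℝ)+2) := by
          have h9 : ((m:ℝ)+2) ≠ 0 := by positivity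
          field_simp
      _ ≤ 2 * (4*((m:ℝ)+2)*(2*(m:ℝ)+1)) := by have := Nat.cast_nonneg (α:=ℝ) m; nlinarith

lemma summable_bound : Summable (fun n : ℕ => 2/((n:ℝ)+1)^2) := by
  have h : Summable (fun n : ℕ => 1/((n:ℝ))^2) := by
    rw [Real.summable_one_div_nat_pow]; norm_num
  have h2 := (summable_nat_add_iff 1).mpr h
  have h3 : (fun n : ℕ => 2/((n:ℝ)+1)^2) = fun n : ℕ => 2 * (1/((((n+1:ℕ)):ℝ))^2) := by
    funext n; push_cast; ring
  rw [h3]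
  exact h2.mul_left 2

lemma summable_tt : Summable tt :=
  Summable.of_norm_bounded summable_bound tt_bound

noncomputable def DD (N n : ℕ) : ℝ :=
  ∏ j ∈ Finset.range n, (2*(N:ℝ) - 2*j) / (2*N + 2*j + 3)

noncomputable def GG (N n : ℕ) : ℝ :=
  match n with
  | 0 => 0
  | m + 1 => (-1:ℝ)^m * aa (m+1) ^ 3 * DD N m * (2*(N:ℝ)+3) * ((m:ℝ)+1)^2
      / (2 * (2*(N:ℝ)+2*(m:ℝ)+3) * ((N:ℝ)+1) * ((N:ℝ)+2) * (2*(m:ℝ)+1))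

noncomputable def rho (N : ℕ) : ℝ := ((2*(N:ℝ)+3)^2*((N:ℝ)+1)) / (((N:ℝ)+2)*(2*(N:ℝ)+2)^2)

lemma DD_zero (N : ℕ) : DD N 0 = 1 := by simp [DD]

lemma DD_succ (N n : ℕ) : DD N (n+1) = DD N n * ((2*(N:ℝ) - 2*n) / (2*N + 2*n + 3)) := by
  rw [DD, Finset.prod_range_succ]; rfl

lemma DD_nonneg {N n : ℕ} (h : n ≤ N + 1) : 0 ≤ DD N n := by
  apply Finset.prod_nonneg
  intro j hj
  have hjN : j ≤ N := by
    have := Finset.mem_range.mp hj; omega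
  have : (j:ℝ) ≤ (N:ℝ) := by exact_mod_cast hjN
  apply div_nonneg (by linarith) (by positivity)

lemma DD_le_one {N n : ℕ} (h : n ≤ N + 1) : DD N n ≤ 1 := by
  apply Finset.prod_le_one
  · intro j hj
    have hjN : j ≤ N := by have := Finset.mem_range.mp hj; omega
    have : (j:ℝ) ≤ (N:ℝ) := by exact_mod_cast hjN
    apply div_nonneg (by linarith) (by positivity)
  · intro j hj
    have hj0 : (0:ℝ) ≤ (j:ℝ) := Nat.cast_nonneg j
    rw [div_le_one (by positivity)]
    linarith

lemma DD_rel (N n : ℕ) :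
    DD (N+1) n * ((2*(N:ℝ)+2-2*n) * (2*N+2*n+3)) = DD N n * ((2*N+2)*(2*N+3)) := by
  induction n with
  | zero => simp [DD_zero]
  | succ n ih =>
    have hd : (2*(N:ℝ)+2*n+3) ≠ 0 := by positivity
    apply mul_right_cancel₀ hd
    rw [DD_succ, DD_succ]
    push_cast
    have lhs_eq : DD (N+1) n * ((2*((N:ℝ)+1) - 2*n) / (2*((N:ℝ)+1) + 2*n + 3)) *
        ((2*(N:ℝ)+2-2*(n+1)) * (2*(N:ℝ)+2*(n+1)+3)) * (2*(N:ℝ)+2*n+3)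
        = (DD (N+1) n * ((2*(N:ℝ)+2-2*n) * (2*(N:ℝ)+2*n+3))) *
          ((2*(N:ℝ)-2*n) * (2*(N:ℝ)+2*n+5)) / (2*(N:ℝ)+2*n+5) := by
      field_simp
      ring
    rw [lhs_eq, ih]
    have h5 : (2*(N:ℝ)+2*n+5) ≠ 0 := by positivity
    field_simp

lemma DD_shift {N m : ℕ} (hm : m ≤ N) :
    DD (N+1) (m+1) = DD N m * ((2*(N:ℝ)+2)*(2*N+3)) / ((2*N+2*m+3)*(2*N+2*m+5)) := by
  have hmn : (m:ℝ) ≤ (N:ℝ) := by exact_mod_cast hm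
  have h1 : (2*(N:ℝ)+2-2*m) ≠ 0 := by nlinarith
  have h2 : (2*(N:ℝ)+2*m+3) ≠ 0 := by positivity
  have h3 : (2*(N:ℝ)+2*m+5) ≠ 0 := by positivity
  have hrel := DD_rel N m
  have hDm : DD (N+1) m = DD N m * ((2*(N:ℝ)+2)*(2*N+3)) / ((2*(N:ℝ)+2-2*m) * (2*N+2*m+3)) := by
    rw [eq_div_iff (mul_ne_zero h1 h2)]
    linarith [hrel]
  rw [DD_succ, hDm]
  push_cast
  have h1' : ((N:ℝ)+1-m) ≠ 0 := by intro h; linarith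
  field_simp
  ring

lemma GG_zero (N : ℕ) : GG N 0 = 0 := rfl

lemma GG_succ (N m : ℕ) : GG N (m+1) = (-1:ℝ)^m * aa (m+1) ^ 3 * DD N m * (2*(N:ℝ)+3) * ((m:ℝ)+1)^2
      / (2 * (2*(N:ℝ)+2*(m:ℝ)+3) * ((N:ℝ)+1) * ((N:ℝ)+2) * (2*(m:ℝ)+1)) := rfl

lemma cert0 (N : ℕ) :
    tt 0 * DD (N+1) 0 - rho N * (tt 0 * DD N 0) = GG N 0 - GG N 1 := by
  rw [tt_eq, DD_zero, DD_zero, GG_zero, GG_succ, DD_zero, aa_zero, aa_one, rho]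
  have h1 : ((N:ℝ)+1) ≠ 0 := by positivity
  have h2 : ((N:ℝ)+2) ≠ 0 := by positivity
  have h3 : (2*(N:ℝ)+2) ≠ 0 := by positivity
  have h4 : (2*(N:ℝ)+3) ≠ 0 := by positivity
  norm_num
  field_simp
  ring

lemma certS {N m : ℕ} (hm : m ≤ N) :
    tt (m+1) * DD (N+1) (m+1) - rho N * (tt (m+1) * DD N (m+1)) = GG N (m+1) - GG N (m+2) := by
  have hmn : (m:ℝ) ≤ (N:ℝ) := by exact_mod_cast hm
  have hm0 : (0:ℝ) ≤ (m:ℝ) := Nat.cast_nonneg m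
  have hN0 : (0:ℝ) ≤ (N:ℝ) := Nat.cast_nonneg N
  rw [tt_eq, GG_succ, GG_succ, DD_shift hm, DD_succ, aa_succ (m+1), rho]
  push_cast
  have h1 : (2*(N:ℝ)+2*m+3) ≠ 0 := by positivity
  have h2 : (2*(N:ℝ)+2*m+5) ≠ 0 := by positivity
  have h3 : ((m:ℝ)+2) ≠ 0 := by positivity
  have h4 : (1 - 2*((m:ℝ)+1)) ≠ 0 := by nlinarith
  have h5 : ((N:ℝ)+1) ≠ 0 := by positivity
  have h6 : ((N:ℝ)+2) ≠ 0 := by positivity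
  have h7 : (2*(m:ℝ)+1) ≠ 0 := by positivity
  have h8 : (2*(m:ℝ)+3) ≠ 0 := by positivity
  have h9 : (2*((m:ℝ)+1)+2) ≠ 0 := by positivity
  have h10 : (2*(N:ℝ)+2) ≠ 0 := by positivity
  have h11 : (4*((m:ℝ)+1+1)) ≠ 0 := by positivity
  rw [show (1:ℝ) - 2*((m:ℝ)+1) = -(2*m+1) by ring]
  field_simp
  ring

noncomputable def UU (N : ℕ) : ℝ := ∑ n ∈ Finset.range (N+1), tt n * DD N n

lemma DD_top (N : ℕ) : DD N (N+1) = 0 := by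
  apply Finset.prod_eq_zero (Finset.self_mem_range_succ N)
  rw [sub_self, zero_div]

lemma GG_top (N : ℕ) : GG N (N+2) = 0 := by
  rw [GG_succ, DD_top]
  ring

lemma UU_rec (N : ℕ) : UU (N+1) = rho N * UU N := by
  have key : UU (N+1) - rho N * UU N = 0 := by
    have h0 : ∑ n ∈ Finset.range (N+2), tt n * DD N n = UU N := by
      unfold UU
      rw [Finset.sum_range_succ, DD_top, mul_zero, add_zero]
    have expand : UU (N+1) - rho N * UU N
        = ∑ n ∈ Finset.range (N+2), (tt n * DD (N+1) n - rho N * (tt n * DD N n)) := by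
      rw [Finset.sum_sub_distrib, ← Finset.mul_sum, h0]
      rfl
    rw [expand]
    have step : ∀ n ∈ Finset.range (N+2),
        tt n * DD (N+1) n - rho N * (tt n * DD N n) = GG N n - GG N (n+1) := by
      intro n hn
      match n with
      | 0 => exact cert0 N
      | m+1 =>
        have hm : m ≤ N := by have := Finset.mem_range.mp hn; omega
        exact certS hm
    rw [Finset.sum_congr rfl step, Finset.sum_range_sub' (fun n => GG N n), GG_zero, GG_top]
    ring
  linarith [key]

lemma UU_closed (N : ℕ) : UU N = (2*(N:ℝ)+1)^2 / (4*((N:ℝ)+1)) * aa N ^ 2 := by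
  induction N with
  | zero =>
    unfold UU
    rw [Finset.sum_range_one, DD_zero, tt_eq, aa_zero]
    norm_num
  | succ N ih =>
    rw [UU_rec, ih, aa_succ, rho]
    push_cast
    have h1 : ((N:ℝ)+1) ≠ 0 := by positivity
    have h2 : ((N:ℝ)+2) ≠ 0 := by positivity
    have h3 : (2*(N:ℝ)+2) ≠ 0 := by positivity
    field_simp
    ring

lemma wallis_aa (N : ℕ) :
    (∏ i ∈ Finset.range N, ((2:ℝ)*i+2)/(2*i+1) * ((2*i+2)/(2*i+3))) * ((2*(N:ℝ)+1) * aa N ^ 2) = 1 := by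
  induction N with
  | zero => simp [aa_zero]
  | succ N ih =>
    rw [Finset.prod_range_succ, aa_succ]
    push_cast
    have h1 : (2*(N:ℝ)+1) ≠ 0 := by positivity
    have h2 : (2*(N:ℝ)+2) ≠ 0 := by positivity
    have h3 : (2*(N:ℝ)+3) ≠ 0 := by positivity
    have goal_eq : (∏ i ∈ Finset.range N, ((2:ℝ)*i+2)/(2*i+1) * ((2*i+2)/(2*i+3)))
          * ((2*(N:ℝ)+2)/(2*N+1) * ((2*N+2)/(2*N+3)))
          * ((2*((N:ℝ)+1)+1) * (aa N * ((2*(N:ℝ)+1)/(2*(N:ℝ)+2))) ^ 2)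
        = (∏ i ∈ Finset.range N, ((2:ℝ)*i+2)/(2*i+1) * ((2*i+2)/(2*i+3)))
          * ((2*(N:ℝ)+1) * aa N ^ 2) := by
      field_simp
      ring
    rw [goal_eq, ih]

lemma tendsto_weight : Tendsto (fun N : ℕ => (2*(N:ℝ)+1) * aa N ^ 2) atTop (𝓝 (2/Real.pi)) := by
  have hW := Real.tendsto_prod_pi_div_two
  have hne : (Real.pi/2) ≠ 0 := by
    have := Real.pi_pos; positivity
  have hinv := hW.inv₀ hne
  have heq : (fun N : ℕ => (2*(N:ℝ)+1) * aa N ^ 2)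
      = fun N : ℕ => (∏ i ∈ Finset.range N, ((2:ℝ)*i+2)/(2*i+1) * ((2*i+2)/(2*i+3)))⁻¹ := by
    funext N
    have h := wallis_aa N
    rw [mul_comm] at h
    exact eq_inv_of_mul_eq_one_left h
  rw [heq]
  have : (Real.pi/2)⁻¹ = 2/Real.pi := by
    field_simp
  rw [← this]
  exact hinv

lemma tendsto_UU : Tendsto UU atTop (𝓝 (1/Real.pi)) := by
  have h1 : Tendsto (fun N : ℕ => 1/(2:ℝ) - 1/(4*((N:ℝ)+1))) atTop (𝓝 (1/2)) := by
    have h0 : Tendsto (fun N : ℕ => 1/((N:ℝ)+1)) atTop (𝓝 0) :=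
      tendsto_one_div_add_atTop_nhds_zero_nat
    have := (h0.const_mul (1/4)).const_sub (1/(2:ℝ))
    simp only [mul_zero, sub_zero] at this
    convert this using 2 with N
    field_simp
  have h2 := tendsto_weight.mul h1
  have heq : (fun N : ℕ => ((2*(N:ℝ)+1) * aa N ^ 2) * (1/(2:ℝ) - 1/(4*((N:ℝ)+1)))) = UU := by
    funext N
    rw [UU_closed]
    have h3 : ((N:ℝ)+1) ≠ 0 := by positivity
    field_simp
    ring
  rw [heq] at h2
  have : 2/Real.pi * (1/2) = 1/Real.pi := by
    field_simp
  rwa [this] at h2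

lemma DD_tendsto_one (k : ℕ) : Tendsto (fun N : ℕ => DD N k) atTop (𝓝 1) := by
  have hfac : ∀ j : ℕ, Tendsto (fun N : ℕ => (2*(N:ℝ) - 2*j) / (2*N + 2*j + 3)) atTop (𝓝 1) := by
    intro j
    have hden : Tendsto (fun N : ℕ => 2*(N:ℝ) + 2*j + 3) atTop atTop := by
      apply Filter.tendsto_atTop_add_const_right
      apply Filter.tendsto_atTop_add_const_right
      exact (tendsto_natCast_atTop_atTop (R := ℝ)).const_mul_atTop (by norm_num)
    have hsub : Tendsto (fun N : ℕ => (4*(j:ℝ)+3) / (2*(N:ℝ) + 2*j + 3)) atTop (𝓝 0) :=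
      Tendsto.div_atTop tendsto_const_nhds hden
    have heq : ∀ N : ℕ, (2*(N:ℝ) - 2*j) / (2*N + 2*j + 3)
        = 1 - (4*(j:ℝ)+3) / (2*(N:ℝ) + 2*j + 3) := by
      intro N
      have h0 : (2*(N:ℝ) + 2*j + 3) ≠ 0 := by positivity
      field_simp
      ring
    simp only [heq]
    have := hsub.const_sub 1
    simpa using this
  have : Tendsto (fun N : ℕ => ∏ j ∈ Finset.range k, (2*(N:ℝ) - 2*j) / (2*N + 2*j + 3))
      atTop (𝓝 (∏ j ∈ Finset.range k, 1)) := by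
    apply tendsto_finset_prod
    intro j _
    exact hfac j
  simpa [DD] using this

lemma tendsto_UU_tsum : Tendsto UU atTop (𝓝 (∑' n, tt n)) := by
  have key := tendsto_tsum_of_dominated_convergence (𝓕 := atTop)
    (f := fun N k => if k ≤ N then tt k * DD N k else 0)
    (g := tt) (bound := fun n : ℕ => 2/((n:ℝ)+1)^2)
    summable_bound
    (by
      intro k
      have hDD := (DD_tendsto_one k).const_mul (tt k)
      rw [mul_one] at hDD
      apply hDD.congr'
      filter_upwards [eventually_ge_atTop k] with N hN
      rw [if_pos hN])
    (by
      filter_upwards with N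
      intro k
      by_cases hk : k ≤ N
      · rw [if_pos hk]
        have h1 : ‖tt k * DD N k‖ = ‖tt k‖ * |DD N k| := by
          rw [norm_mul]; rfl
        rw [h1, abs_of_nonneg (DD_nonneg (by omega))]
        calc ‖tt k‖ * DD N k ≤ ‖tt k‖ * 1 :=
              mul_le_mul_of_nonneg_left (DD_le_one (by omega)) (norm_nonneg _)
          _ = ‖tt k‖ := mul_one _
          _ ≤ 2/((k:ℝ)+1)^2 := tt_bound k
      · rw [if_neg hk]
        simp only [norm_zero]
        positivity)
  have heq : (fun N => ∑' k, if k ≤ N then tt k * DD N k else 0) = UU := by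
    funext N
    rw [tsum_eq_sum (s := Finset.range (N+1))]
    · unfold UU
      apply Finset.sum_congr rfl
      intro n hn
      rw [if_pos (by have := Finset.mem_range.mp hn; omega)]
    · intro b hb
      rw [if_neg (by intro h; exact hb (Finset.mem_range.mpr (by omega)))]
  rwa [heq] at key

theorem stmt_0 :
    ∑' n : ℕ, ((-1 : ℝ) ^ n * (4 * n + 1) / (4 * (n + 1) * (1 - 2 * n))) *
      ((Nat.centralBinom n : ℝ) / 4 ^ n) ^ 3 = 1 / Real.pi := by
  have h1 := tendsto_UU_tsum
  have h2 := tendsto_UU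
  have h3 := tendsto_nhds_unique h1 h2
  exact h3
end

section
/- The series ∑_{n≥0} 3(4n+1) / (32(n+1)^2(1-2n)^2) · (C(2n,n)/4^n)^4 equals 1/π². -/
open Filter Finset Real

noncomputable def dAux (n : ℕ) : ℝ :=
  (4 * n ^ 4 - 2 * n ^ 3 - n ^ 2 / 2) /
    ((2 * n - 1) ^ 2 * (2 * n + 1) ^ 2 * (Real.Wallis.W n) ^ 2)

lemma twon_sub_one_ne (n : ℕ) : (2 * (n : ℝ) - 1) ≠ 0 := by
  rcases Nat.eq_zero_or_pos n with h | h
  · simp [h]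
  · have : (1 : ℝ) ≤ n := by exact_mod_cast h
    nlinarith

lemma centralBinom_sq (n : ℕ) :
    ((Nat.centralBinom n : ℝ) / 4 ^ n) ^ 2 = 1 / ((2 * n + 1) * Real.Wallis.W n) := by
  have hfactN : Nat.centralBinom n * (n.factorial * n.factorial) = (2 * n).factorial := by
    have h := Nat.choose_mul_factorial_mul_factorial (Nat.le_mul_of_pos_left n two_pos)
    simp only [Nat.centralBinom, two_mul, Nat.add_sub_cancel] at h ⊢
    rw [← h]; ring
  have hfact : (Nat.centralBinom n : ℝ) * ((n.factorial : ℝ) * n.factorial)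
      = ((2 * n).factorial : ℝ) := by exact_mod_cast congrArg Nat.cast hfactN
  have hW := Real.Wallis.W_eq_factorial_ratio n
  have h1 : (((2 * n).factorial : ℕ) : ℝ) ≠ 0 := by positivity
  have h2 : ((n.factorial : ℕ) : ℝ) ≠ 0 := by positivity
  have h3 : (2 * (n : ℝ) + 1) ≠ 0 := by positivity
  have h4 : ((2:ℝ) ^ (4 * n)) = ((4:ℝ) ^ n) ^ 2 := by
    rw [← pow_mul, show (4:ℝ) = 2 ^ 2 by norm_num, ← pow_mul]; congr 1; ring
  have h5 : (Nat.centralBinom n : ℝ) ^ 2 * ((n.factorial : ℝ)) ^ 4 = (((2*n).factorial : ℕ) : ℝ) ^ 2 := by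
    rw [← hfact]; ring
  rw [hW, h4]
  field_simp
  linear_combination h5

lemma step (n : ℕ) :
    (3 * (4 * (n : ℝ) + 1) / (32 * (n + 1) ^ 2 * (1 - 2 * n) ^ 2)) *
      ((Nat.centralBinom n : ℝ) / 4 ^ n) ^ 4 = dAux (n + 1) - dAux n := by
  have h4 : ((Nat.centralBinom n : ℝ) / 4 ^ n) ^ 4
      = (1 / ((2 * n + 1) * Real.Wallis.W n)) ^ 2 := by
    rw [← centralBinom_sq n, ← pow_mul]
  have hWsucc := Real.Wallis.W_succ n
  have hWpos := Real.Wallis.W_pos n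
  have hWne : Real.Wallis.W n ≠ 0 := ne_of_gt hWpos
  have h1 := twon_sub_one_ne n
  have h1' : (2 * ((n : ℝ) + 1) - 1) ≠ 0 := by
    intro h; have : (0:ℝ) ≤ n := n.cast_nonneg; linarith
  have h2 : (2 * (n : ℝ) + 1) ≠ 0 := by positivity
  have h3 : (2 * (n : ℝ) + 3) ≠ 0 := by positivity
  have h5 : ((n : ℝ) + 1) ≠ 0 := by positivity
  have h6 : (1 - 2 * (n : ℝ)) ^ 2 = (2 * n - 1) ^ 2 := by ring
  rw [h4, dAux, dAux, hWsucc, h6]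
  push_cast
  field_simp
  have h7 : ((n : ℝ) * 2 - 1) ≠ 0 := by intro h; apply h1; linarith
  have h8 : (((n : ℝ) + 1) * 2 - 1) ≠ 0 := by intro h; apply h1'; linarith
  field_simp
  ring

lemma dAux_tendsto : Tendsto dAux atTop (nhds (1 / Real.pi ^ 2)) := by
  have h1 : Tendsto (fun n : ℕ => (1 : ℝ) / n) atTop (nhds 0) :=
    tendsto_one_div_atTop_nhds_zero_nat
  have hW : Tendsto (fun n : ℕ => Real.Wallis.W n) atTop (nhds (π / 2)) :=
    Real.Wallis.tendsto_W_nhds_pi_div_two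
  have key : ∀ᶠ n : ℕ in atTop, dAux n =
      (4 - 2 * (1/(n:ℝ)) - (1/(n:ℝ))^2 / 2) /
        ((2 - (1/(n:ℝ))) ^ 2 * (2 + (1/(n:ℝ))) ^ 2 * (Real.Wallis.W n) ^ 2) := by
    filter_upwards [eventually_ge_atTop 1] with n hn
    have hn' : ((n : ℝ)) ≠ 0 := by
      have : (1:ℝ) ≤ n := by exact_mod_cast hn
      linarith
    rw [dAux]
    rw [div_eq_div_iff]
    · field_simp
    · have := twon_sub_one_ne n
      have h2 : (2 * (n : ℝ) + 1) ≠ 0 := by positivity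
      have := Real.Wallis.W_pos n
      positivity
    · have ha : (2 - (1/(n:ℝ))) ≠ 0 := by
        have : (1:ℝ) ≤ n := by exact_mod_cast hn
        have : 1/(n:ℝ) ≤ 1 := by
          rw [div_le_one]; linarith; linarith
        intro h; nlinarith [one_div_pos.mpr (show (0:ℝ) < n by linarith)]
      have hb : (2 + (1/(n:ℝ))) ≠ 0 := by positivity
      have := Real.Wallis.W_pos n
      positivity
  have hπ : (π : ℝ) ≠ 0 := Real.pi_ne_zero
  have hlim : Tendsto (fun n : ℕ =>
      (4 - 2 * (1/(n:ℝ)) - (1/(n:ℝ))^2 / 2) /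
        ((2 - (1/(n:ℝ))) ^ 2 * (2 + (1/(n:ℝ))) ^ 2 * (Real.Wallis.W n) ^ 2)) atTop
      (nhds ((4 - 2 * 0 - 0^2 / 2) / ((2 - 0)^2 * (2 + 0)^2 * (π/2)^2))) := by
    apply Tendsto.div
    · exact (tendsto_const_nhds.sub (h1.const_mul 2)).sub (((h1.pow 2)).div_const 2)
    · exact (((tendsto_const_nhds.sub h1).pow 2).mul ((tendsto_const_nhds.add h1).pow 2)).mul
        (hW.pow 2)
    · have : (0:ℝ) < π/2 := Real.pi_div_two_pos
      positivity
  have : ((4 : ℝ) - 2 * 0 - 0^2 / 2) / ((2 - 0)^2 * (2 + 0)^2 * (π/2)^2) = 1 / π ^ 2 := by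
    field_simp; ring
  rw [this] at hlim
  exact Filter.Tendsto.congr' (by filter_upwards [key] with n h using h.symm) hlim

theorem stmt_1 :
    ∑' n : ℕ, (3 * (4 * (n : ℝ) + 1) / (32 * (n + 1) ^ 2 * (1 - 2 * n) ^ 2)) *
      ((Nat.centralBinom n : ℝ) / 4 ^ n) ^ 4 = 1 / Real.pi ^ 2 := by
  set f : ℕ → ℝ := fun n =>
    (3 * (4 * (n : ℝ) + 1) / (32 * (n + 1) ^ 2 * (1 - 2 * n) ^ 2)) *
      ((Nat.centralBinom n : ℝ) / 4 ^ n) ^ 4 with hf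
  have hnn : ∀ n, 0 ≤ f n := by
    intro n
    have h6 : (0:ℝ) < (1 - 2 * (n:ℝ)) ^ 2 := by
      have := twon_sub_one_ne n
      have : (1 - 2 * (n:ℝ)) ≠ 0 := by intro h; apply this; linarith
      positivity
    have : (0:ℝ) ≤ 3 * (4 * (n : ℝ) + 1) := by positivity
    positivity
  have hsum : HasSum f (1 / Real.pi ^ 2) := by
    rw [hasSum_iff_tendsto_nat_of_nonneg hnn]
    have heq : ∀ N : ℕ, ∑ i ∈ range N, f i = dAux N := by
      intro N
      have : ∑ i ∈ range N, f i = ∑ i ∈ range N, (dAux (i+1) - dAux i) := by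
        apply Finset.sum_congr rfl
        intro i _
        exact step i
      rw [this, Finset.sum_range_sub dAux]
      simp [dAux]
    simp only [heq]
    exact dAux_tendsto
  exact hsum.tsum_eq
end

section
/- The series ∑_{n≥0} (8n²+8n+1)/(n+1)² · (C(2n,n)/4^n)^4 equals 16/π². -/
open Filter Topology Finset

noncomputable def cb (n : ℕ) : ℝ := (Nat.centralBinom n : ℝ) / 4 ^ n

lemma cb_pos (n : ℕ) : 0 < cb n := by
  have := Nat.centralBinom_pos n
  unfold cb
  positivity

lemma cb_succ (n : ℕ) : cb (n + 1) = cb n * (2 * n + 1) / (2 * (n + 1)) := by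
  have h := Nat.succ_mul_centralBinom_succ n
  have h' : ((n : ℝ) + 1) * (Nat.centralBinom (n + 1) : ℝ)
      = 2 * (2 * n + 1) * Nat.centralBinom n := by exact_mod_cast congrArg Nat.cast h
  have hn : ((n : ℝ) + 1) ≠ 0 := by positivity
  have h4 : (4 : ℝ) ^ n ≠ 0 := by positivity
  unfold cb
  rw [pow_succ]
  field_simp
  linear_combination 2 * h'

lemma cb_factorial (n : ℕ) :
    (Nat.centralBinom n : ℝ) * (Nat.factorial n * Nat.factorial n) = Nat.factorial (2 * n) := by
  have h := Nat.choose_mul_factorial_mul_factorial (Nat.le_mul_of_pos_left n (by norm_num) : n ≤ 2 * n)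
  have h2 : 2 * n - n = n := by omega
  rw [h2] at h
  rw [Nat.centralBinom]
  exact_mod_cast (by rw [← h]; ring :
    (2 * n).choose n * (Nat.factorial n * Nat.factorial n) = Nat.factorial (2 * n))

lemma cb_sq_wallis (n : ℕ) :
    (2 * (n : ℝ) + 1) * cb n ^ 2 = 1 / Real.Wallis.W n := by
  rw [Real.Wallis.W_eq_factorial_ratio]
  have hf : (0 : ℝ) < Nat.factorial n := by exact_mod_cast Nat.factorial_pos n
  have hf2 : (0 : ℝ) < Nat.factorial (2 * n) := by exact_mod_cast Nat.factorial_pos (2 * n)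
  have hcb := cb_factorial n
  have h4 : (4 : ℝ) ^ n ≠ 0 := by positivity
  have h2 : ((2 : ℝ) ^ (4 * n)) = (4 ^ n) ^ 2 := by
    rw [show (4 : ℝ) = 2 ^ 2 by norm_num, ← pow_mul, ← pow_mul]
    congr 1
    omega
  have hsq : ((Nat.centralBinom n : ℝ) * (Nat.factorial n * Nat.factorial n)) ^ 2
      = ((Nat.factorial (2 * n) : ℝ)) ^ 2 := by rw [hcb]
  unfold cb
  rw [div_pow, one_div_div, h2]
  have hn1 : (0 : ℝ) < 2 * n + 1 := by positivity
  field_simp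
  linear_combination hsq

lemma tendsto_cb_sq : Tendsto (fun n : ℕ => (n : ℝ) * cb n ^ 2) atTop (𝓝 (1 / Real.pi)) := by
  have hW := Real.Wallis.tendsto_W_nhds_pi_div_two
  have hWne : (Real.pi / 2) ≠ 0 := by positivity
  have h1 : Tendsto (fun n : ℕ => (2 * (n : ℝ) + 1) * cb n ^ 2) atTop (𝓝 (2 / Real.pi)) := by
    have := hW.inv₀ hWne
    simp only [cb_sq_wallis, one_div]
    convert this using 2
    rw [inv_div]
  have h2 : Tendsto (fun n : ℕ => (n : ℝ) / (2 * n + 1)) atTop (𝓝 (1 / 2)) := by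
    have : Tendsto (fun n : ℕ => ((n : ℝ) + 1/2)⁻¹) atTop (𝓝 0) := by
      apply Tendsto.inv_tendsto_atTop
      apply tendsto_atTop_add_const_right
      exact tendsto_natCast_atTop_atTop
    have h3 : Tendsto (fun n : ℕ => 1/2 - (1/2) * ((n : ℝ) + 1/2)⁻¹ * (1/2)) atTop
        (𝓝 (1/2 - (1/2) * 0 * (1/2))) := by
      exact (tendsto_const_nhds.mul this).mul tendsto_const_nhds |>.const_sub _
    simp only [mul_zero, zero_mul, sub_zero] at h3
    convert h3 using 2 with n
    have hn : ((n : ℝ) + 1/2) ≠ 0 := by positivity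
    field_simp
    ring
  have := h1.mul h2
  have key : ∀ n : ℕ, (2 * (n : ℝ) + 1) * cb n ^ 2 * ((n : ℝ) / (2 * n + 1))
      = (n : ℝ) * cb n ^ 2 := by
    intro n
    have hn : (2 * (n : ℝ) + 1) ≠ 0 := by positivity
    field_simp
  simp only [key] at this
  convert this using 2
  ring

theorem stmt_2 :
    ∑' n : ℕ, ((8 * (n : ℝ) ^ 2 + 8 * n + 1) / (n + 1) ^ 2) *
      ((Nat.centralBinom n : ℝ) / 4 ^ n) ^ 4 = 16 / Real.pi ^ 2 := by
  set f : ℕ → ℝ := fun n => 16 * (n : ℝ) ^ 2 * cb n ^ 4 with hf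
  have hterm : ∀ n : ℕ, ((8 * (n : ℝ) ^ 2 + 8 * n + 1) / (n + 1) ^ 2) *
      ((Nat.centralBinom n : ℝ) / 4 ^ n) ^ 4 = f (n + 1) - f n := by
    intro n
    have hcb : ((Nat.centralBinom n : ℝ) / 4 ^ n) = cb n := rfl
    simp only [hf, hcb, cb_succ n]
    have hn : ((n : ℝ) + 1) ≠ 0 := by positivity
    push_cast
    field_simp
    ring
  have hsum : ∀ N : ℕ, ∑ n ∈ range N, ((8 * (n : ℝ) ^ 2 + 8 * n + 1) / (n + 1) ^ 2) *
      ((Nat.centralBinom n : ℝ) / 4 ^ n) ^ 4 = f N := by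
    intro N
    simp only [hterm]
    rw [Finset.sum_range_sub]
    simp [hf]
  have hnonneg : ∀ n : ℕ, 0 ≤ ((8 * (n : ℝ) ^ 2 + 8 * n + 1) / (n + 1) ^ 2) *
      ((Nat.centralBinom n : ℝ) / 4 ^ n) ^ 4 := by
    intro n
    have h1 : (0 : ℝ) ≤ (8 * (n : ℝ) ^ 2 + 8 * n + 1) := by positivity
    positivity
  have hlim : Tendsto f atTop (𝓝 (16 / Real.pi ^ 2)) := by
    have := tendsto_cb_sq
    have h2 := (this.mul this).const_mul (16 : ℝ)
    convert h2 using 2 with n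
    · simp only [hf]; ring
    · ring
  have : HasSum (fun n : ℕ => ((8 * (n : ℝ) ^ 2 + 8 * n + 1) / (n + 1) ^ 2) *
      ((Nat.centralBinom n : ℝ) / 4 ^ n) ^ 4) (16 / Real.pi ^ 2) := by
    rw [hasSum_iff_tendsto_nat_of_nonneg hnonneg]
    simpa only [hsum] using hlim
  exact this.tsum_eq
end

section
/- The series ∑_{n≥0} (1/(4n+1)) (C(2n,n)/4^n)² equals Γ(1/4)^4 / (16π²). -/
open MeasureTheory intervalIntegral Real Set Filter

noncomputable def wal (n : ℕ) : ℝ := (Nat.centralBinom n : ℝ) / 4 ^ n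

lemma wal_zero : wal 0 = 1 := by simp [wal, Nat.centralBinom]

lemma wal_pos (n : ℕ) : 0 < wal n :=
  div_pos (by exact_mod_cast Nat.centralBinom_pos n) (by positivity)

lemma wal_succ (n : ℕ) : wal (n + 1) = wal n * ((2 * n + 1) / (2 * n + 2)) := by
  have h := Nat.succ_mul_centralBinom_succ n
  have h' : ((n : ℝ) + 1) * (Nat.centralBinom (n + 1) : ℝ)
      = 2 * (2 * n + 1) * (Nat.centralBinom n : ℝ) := by exact_mod_cast h
  have hn1 : ((n : ℝ) + 1) ≠ 0 := by positivity
  have h4 : (4 : ℝ) ^ n ≠ 0 := by positivity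
  have h22 : (2 * (n : ℝ) + 2) ≠ 0 := by positivity
  have hcb : (Nat.centralBinom (n + 1) : ℝ)
      = 2 * (2 * n + 1) * (Nat.centralBinom n : ℝ) / ((n : ℝ) + 1) := by
    field_simp at h' ⊢; linarith [h']
  rw [wal, wal, hcb, pow_succ]
  field_simp
  ring

lemma wal_le_one (n : ℕ) : wal n ≤ 1 := by
  induction n with
  | zero => simp [wal_zero]
  | succ k ih =>
    rw [wal_succ]
    have h1 : (2 * (k:ℝ) + 1) / (2 * k + 2) ≤ 1 := by
      rw [div_le_one (by positivity)]; linarith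
    calc wal k * ((2 * k + 1) / (2 * k + 2)) ≤ 1 * 1 :=
          mul_le_mul ih h1 (by positivity) one_pos.le
      _ = 1 := by ring

lemma wal_sq (n : ℕ) : wal n ^ 2 * (2 * n + 1) ≤ 1 := by
  induction n with
  | zero => simp [wal_zero]
  | succ k ih =>
    rw [wal_succ]
    have hk : (0:ℝ) < 2 * k + 2 := by positivity
    have key : ((2 * (k:ℝ) + 1) / (2 * k + 2)) ^ 2 * (2 * (k + 1) + 1)
        ≤ (2 * k + 1) := by
      rw [div_pow, div_mul_eq_mul_div, div_le_iff₀ (by positivity)]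
      push_cast
      nlinarith
    have hw2 : (0:ℝ) ≤ wal k ^ 2 := sq_nonneg _
    push_cast
    calc (wal k * ((2 * k + 1) / (2 * k + 2))) ^ 2 * (2 * ((k:ℝ) + 1) + 1)
        = wal k ^ 2 * (((2 * (k:ℝ) + 1) / (2 * k + 2)) ^ 2 * (2 * ((k:ℝ) + 1) + 1)) := by
          push_cast; ring
      _ ≤ wal k ^ 2 * (2 * k + 1) := by
          apply mul_le_mul_of_nonneg_left _ hw2
          · push_cast at key ⊢; exact key
      _ ≤ 1 := ih

lemma wal_le_inv_sqrt (n : ℕ) : wal n ≤ 1 / Real.sqrt ((n : ℝ) + 1) := by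
  have h1 : (0:ℝ) < (n:ℝ) + 1 := by positivity
  have h2 : wal n ^ 2 ≤ 1 / ((n:ℝ) + 1) := by
    have h3 := wal_sq n
    rw [le_div_iff₀ h1]
    nlinarith [sq_nonneg (wal n)]
  have h4 : wal n = Real.sqrt (wal n ^ 2) := by
    rw [Real.sqrt_sq (wal_pos n).le]
  rw [h4, one_div, ← Real.sqrt_inv]
  exact Real.sqrt_le_sqrt (by rw [← one_div]; exact h2)

lemma prod_wal (n : ℕ) :
    ∏ i ∈ Finset.range n, (2 * (i : ℝ) + 1) / (2 * i + 2) = wal n := by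
  induction n with
  | zero => simp [wal_zero]
  | succ k ih => rw [Finset.prod_range_succ, ih, ← wal_succ]

lemma sin_pow_reflect (m : ℕ) :
    ∫ x in (π/2)..π, Real.sin x ^ m = ∫ x in (0:ℝ)..(π/2), Real.sin x ^ m := by
  have h1 : ∀ x : ℝ, Real.sin x ^ m = Real.sin (π - x) ^ m := fun x => by rw [Real.sin_pi_sub]
  calc ∫ x in (π/2)..π, Real.sin x ^ m
      = ∫ x in (π/2)..π, Real.sin (π - x) ^ m := by simp_rw [← h1]
    _ = ∫ x in (π-π)..(π-π/2), Real.sin x ^ m := by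
        rw [intervalIntegral.integral_comp_sub_left (fun x => Real.sin x ^ m) π]
    _ = ∫ x in (0:ℝ)..(π/2), Real.sin x ^ m := by rw [sub_self, sub_half]

lemma wallis_half (n : ℕ) :
    ∫ x in (0:ℝ)..(π/2), Real.sin x ^ (2 * n) = π / 2 * wal n := by
  have hsplit : (∫ x in (0:ℝ)..(π/2), Real.sin x ^ (2*n))
      + ∫ x in (π/2)..π, Real.sin x ^ (2*n) = ∫ x in (0:ℝ)..π, Real.sin x ^ (2*n) :=
    intervalIntegral.integral_add_adjacent_intervals
      ((Real.continuous_sin.pow _).intervalIntegrable _ _)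
      ((Real.continuous_sin.pow _).intervalIntegrable _ _)
  rw [sin_pow_reflect] at hsplit
  have := integral_sin_pow_even (n := n)
  rw [prod_wal] at this
  linarith [hsplit, this]

lemma interchange {f : ℕ → ℝ → ℝ} {s : Set ℝ} (hms : MeasurableSet s)
    (hm : ∀ n, AEStronglyMeasurable (f n) (volume.restrict s))
    (h0 : ∀ n x, x ∈ s → 0 ≤ f n x)
    (hi : ∀ n, IntegrableOn (f n) s)
    (hs : Summable fun n => ∫ x in s, f n x) :
    ∫ x in s, ∑' n, f n x = ∑' n, ∫ x in s, f n x := by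
  apply MeasureTheory.integral_tsum hm
  have h0' : ∀ n, 0 ≤ᵐ[volume.restrict s] f n := fun n =>
    (ae_restrict_iff' hms).2 (Eventually.of_forall fun x hx => h0 n x hx)
  have key : ∀ n, ∫⁻ x in s, ‖f n x‖ₑ = ENNReal.ofReal (∫ x in s, f n x) := by
    intro n
    rw [MeasureTheory.ofReal_integral_eq_lintegral_ofReal (hi n) (h0' n)]
    apply lintegral_congr_ae
    filter_upwards [h0' n] with x hx
    rw [← Real.enorm_eq_ofReal hx]
  rw [funext key, ← ENNReal.ofReal_tsum_of_nonneg
    (fun n => integral_nonneg_of_ae (h0' n)) hs]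
  exact ENNReal.ofReal_ne_top

lemma geom_integral {y : ℝ} (hy0 : 0 ≤ y) (hy1 : y < 1) :
    ∫ θ in (0:ℝ)..(π/2), (1 - y * Real.sin θ ^ 2)⁻¹ = π / (2 * Real.sqrt (1 - y)) := by
  set c := Real.sqrt (1 - y) with hc
  have hcpos : 0 < c := Real.sqrt_pos.2 (by linarith)
  have hcsq : c ^ 2 = 1 - y := Real.sq_sqrt (by linarith)
  set f : ℝ → ℝ := fun θ => (1 - y * Real.sin θ ^ 2)⁻¹ with hf
  have hpos : ∀ θ : ℝ, 0 < 1 - y * Real.sin θ ^ 2 := by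
    intro θ
    have h1 : Real.sin θ ^ 2 ≤ 1 := Real.sin_sq_le_one θ
    nlinarith
  have hfc : Continuous f := by
    apply Continuous.inv₀ (by continuity)
    intro θ; exact (hpos θ).ne'
  set J : ℝ → ℝ := fun θ => (1 / c) * Real.arctan (c * Real.tan θ) with hJ
  -- FTC on [0, b] for b < π/2
  have hFTC : ∀ b ∈ Ico (0:ℝ) (π/2), ∫ θ in (0:ℝ)..b, f θ = J b := by
    intro b hb
    have hderiv : ∀ θ ∈ uIcc (0:ℝ) b, HasDerivAt J (f θ) θ := by
      intro θ hθ
      rw [uIcc_of_le hb.1] at hθ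
      have hcos : Real.cos θ ≠ 0 := by
        apply (Real.cos_pos_of_mem_Ioo ⟨by linarith [hθ.1, pi_pos], lt_of_le_of_lt hθ.2 hb.2⟩).ne'
      have h1 : HasDerivAt Real.tan (1 / Real.cos θ ^ 2) θ := Real.hasDerivAt_tan hcos
      have h2 : HasDerivAt (fun t : ℝ => c * Real.tan t) (c * (1 / Real.cos θ ^ 2)) θ :=
        h1.const_mul c
      have h3 : HasDerivAt (fun t : ℝ => Real.arctan (c * Real.tan t))
          ((1 / (1 + (c * Real.tan θ) ^ 2)) * (c * (1 / Real.cos θ ^ 2))) θ :=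
        ((Real.hasDerivAt_arctan (c * Real.tan θ)).comp θ h2 :)
      have h4 := h3.const_mul (1 / c)
      refine h4.congr_deriv (Eq.symm ?_)
      have hcos2 : Real.cos θ ^ 2 ≠ 0 := pow_ne_zero _ hcos
      have h6 : 1 + (c * Real.tan θ) ^ 2 = (1 - y * Real.sin θ ^ 2) / Real.cos θ ^ 2 := by
        rw [Real.tan_eq_sin_div_cos]
        field_simp
        nlinarith [Real.sin_sq_add_cos_sq θ, hcsq]
      rw [hf, h6]
      field_simp
    rw [intervalIntegral.integral_eq_sub_of_hasDerivAt hderiv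
      (hfc.intervalIntegrable _ _)]
    simp [hJ, Real.tan_zero]
  -- limits as b → π/2 from the left
  have hlim1 : Tendsto (fun b => ∫ θ in (0:ℝ)..b, f θ) (nhdsWithin (π/2) (Iio (π/2)))
      (nhds (∫ θ in (0:ℝ)..(π/2), f θ)) := by
    have := (intervalIntegral.continuous_primitive (fun a b => hfc.intervalIntegrable (μ := volume) a b) 0).continuousAt (x := π/2)
    exact this.continuousWithinAt.tendsto
  have hlim2 : Tendsto J (nhdsWithin (π/2) (Iio (π/2))) (nhds ((1/c) * (π/2))) := by
    apply Tendsto.const_mul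
    have h5 : Tendsto (fun θ => c * Real.tan θ) (nhdsWithin (π/2) (Iio (π/2))) atTop :=
      (Real.tendsto_tan_pi_div_two).const_mul_atTop hcpos
    exact (Real.tendsto_arctan_atTop.mono_right nhdsWithin_le_nhds).comp h5
  have heq : (fun b => ∫ θ in (0:ℝ)..b, f θ) =ᶠ[nhdsWithin (π/2) (Iio (π/2))] J := by
    filter_upwards [Ioo_mem_nhdsLT_of_mem (b := π/2) (by constructor <;> [positivity; rfl])]
      with b hb
    exact hFTC b ⟨hb.1.le, hb.2⟩
  have := tendsto_nhds_unique (hlim1.congr' heq) hlim2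
  rw [this]
  field_simp

lemma binomial {y : ℝ} (hy0 : 0 ≤ y) (hy1 : y < 1) :
    HasSum (fun n => wal n * y ^ n) (1 / Real.sqrt (1 - y)) := by
  have hsum : Summable (fun n => wal n * y ^ n) := by
    apply Summable.of_nonneg_of_le
      (fun n => mul_nonneg (wal_pos n).le (by positivity)) (fun n => ?_)
      (summable_geometric_of_lt_one hy0 hy1)
    calc wal n * y ^ n ≤ 1 * y ^ n :=
          mul_le_mul_of_nonneg_right (wal_le_one n) (by positivity)
      _ = y ^ n := one_mul _
  refine (Summable.hasSum_iff hsum).2 ?_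
  have hπ2 : (0:ℝ) ≤ π / 2 := by linarith [pi_pos]
  have hlt : ∀ θ : ℝ, y * Real.sin θ ^ 2 < 1 := fun θ => by
    nlinarith [Real.sin_sq_le_one θ, sq_nonneg (Real.sin θ)]
  have hterm : ∀ n, wal n * y ^ n
      = (2/π) * ∫ θ in Set.Ioc (0:ℝ) (π/2), (y * Real.sin θ ^ 2) ^ n := by
    intro n
    have h1 : ∫ θ in Set.Ioc (0:ℝ) (π/2), (y * Real.sin θ ^ 2) ^ n
        = ∫ θ in (0:ℝ)..(π/2), (y * Real.sin θ ^ 2) ^ n :=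
      (intervalIntegral.integral_of_le hπ2).symm
    have h2 : ∀ θ : ℝ, (y * Real.sin θ ^ 2) ^ n = y ^ n * Real.sin θ ^ (2*n) := by
      intro θ; rw [mul_pow, pow_mul]
    rw [h1]
    simp_rw [h2]
    rw [intervalIntegral.integral_const_mul, wallis_half]
    field_simp
  have hcont : ∀ n : ℕ, Continuous (fun θ : ℝ => (y * Real.sin θ ^ 2) ^ n) := by
    intro n; continuity
  have hs : Summable (fun n => ∫ θ in Set.Ioc (0:ℝ) (π/2), (y * Real.sin θ ^ 2) ^ n) := by
    have heq : (fun n => ∫ θ in Set.Ioc (0:ℝ) (π/2), (y * Real.sin θ ^ 2) ^ n)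
        = fun n => (π/2) * (wal n * y ^ n) := by
      funext n
      rw [hterm n]
      field_simp
    rw [heq]
    exact hsum.mul_left _
  have hinter := interchange (f := fun n θ => (y * Real.sin θ ^ 2) ^ n)
    measurableSet_Ioc
    (fun n => (hcont n).aestronglyMeasurable)
    (fun n x _ => by positivity)
    (fun n => (hcont n).integrableOn_Ioc)
    hs
  calc ∑' n, wal n * y ^ n
      = ∑' n, (2/π) * ∫ θ in Set.Ioc (0:ℝ) (π/2), (y * Real.sin θ ^ 2) ^ n :=
        tsum_congr hterm
    _ = (2/π) * ∑' n, ∫ θ in Set.Ioc (0:ℝ) (π/2), (y * Real.sin θ ^ 2) ^ n := tsum_mul_left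
    _ = (2/π) * ∫ θ in Set.Ioc (0:ℝ) (π/2), ∑' n, (y * Real.sin θ ^ 2) ^ n := by
        rw [hinter]
    _ = (2/π) * ∫ θ in Set.Ioc (0:ℝ) (π/2), (1 - y * Real.sin θ ^ 2)⁻¹ := by
        congr 1
        apply MeasureTheory.integral_congr_ae
        apply Eventually.of_forall
        intro θ
        exact tsum_geometric_of_lt_one (by positivity) (hlt θ)
    _ = (2/π) * ∫ θ in (0:ℝ)..(π/2), (1 - y * Real.sin θ ^ 2)⁻¹ := by
        rw [intervalIntegral.integral_of_le hπ2]
    _ = (2/π) * (π / (2 * Real.sqrt (1 - y))) := by rw [geom_integral hy0 hy1]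
    _ = 1 / Real.sqrt (1 - y) := by
        have h7 : Real.sqrt (1 - y) ≠ 0 := (Real.sqrt_pos.2 (by linarith)).ne'
        field_simp

noncomputable def aw (n : ℕ) : ℝ := wal n / (4 * n + 1)

lemma aw_pos (n : ℕ) : 0 < aw n := div_pos (wal_pos n) (by positivity)

lemma aw_le (n : ℕ) : aw n ≤ 1 / ((n : ℝ) + 1) ^ ((3:ℝ)/2) := by
  have hpos : (0:ℝ) < (n:ℝ) + 1 := by positivity
  have hr : ((n:ℝ) + 1) ^ ((3:ℝ)/2) = ((n:ℝ) + 1) * Real.sqrt ((n:ℝ) + 1) := by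
    rw [show (3:ℝ)/2 = 1 + 1/2 by norm_num, Real.rpow_add hpos, Real.rpow_one,
      ← Real.sqrt_eq_rpow]
  rw [hr]
  have h1 : wal n ≤ 1 / Real.sqrt ((n:ℝ) + 1) := wal_le_inv_sqrt n
  have h2 : (1:ℝ) / (4 * (n:ℝ) + 1) ≤ 1 / ((n:ℝ) + 1) := by
    apply one_div_le_one_div_of_le hpos; linarith
  have hsq : 0 < Real.sqrt ((n:ℝ) + 1) := Real.sqrt_pos.2 hpos
  calc aw n = wal n * (1 / (4 * (n:ℝ) + 1)) := by rw [aw]; ring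
    _ ≤ (1 / Real.sqrt ((n:ℝ) + 1)) * (1 / ((n:ℝ) + 1)) := by
        apply mul_le_mul h1 h2 (by positivity) (by positivity)
    _ = 1 / (((n:ℝ) + 1) * Real.sqrt ((n:ℝ) + 1)) := by
        rw [div_mul_div_comm, one_mul, mul_comm]

lemma summable_aux : Summable (fun n : ℕ => 1 / ((n : ℝ) + 1) ^ ((3:ℝ)/2)) := by
  have h := Real.summable_one_div_nat_rpow (p := (3:ℝ)/2) |>.2 (by norm_num)
  have := (summable_nat_add_iff (f := fun n : ℕ => 1 / (n : ℝ) ^ ((3:ℝ)/2)) 1).2 h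
  simpa using this

lemma summable_aw : Summable aw :=
  Summable.of_nonneg_of_le (fun n => (aw_pos n).le) aw_le summable_aux

noncomputable def FF (x : ℝ) : ℝ := ∑' n, aw n * x ^ (4 * n + 1)

noncomputable def Psi (θ : ℝ) : ℝ := ∑' n, aw n * Real.sin θ ^ (2 * n)

lemma FF_contOn : ContinuousOn FF (Icc (-1:ℝ) 1) := by
  apply continuousOn_tsum (u := aw) (fun i => (continuous_const.mul (continuous_pow _)).continuousOn)
    summable_aw
  intro n x hx
  have hx1 : |x| ≤ 1 := abs_le.2 ⟨hx.1, hx.2⟩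
  simp only [Pi.mul_apply, Pi.pow_apply]
  rw [norm_mul, norm_pow, Real.norm_eq_abs, Real.norm_eq_abs, abs_of_pos (aw_pos n)]
  calc aw n * |x| ^ (4*n+1) ≤ aw n * 1 := by
        apply mul_le_mul_of_nonneg_left (pow_le_one₀ (abs_nonneg x) hx1) (aw_pos n).le
    _ = aw n := mul_one _

lemma Psi_cont : Continuous Psi := by
  apply continuous_tsum (u := aw)
    (fun i => continuous_const.mul ((Real.continuous_sin).pow _)) summable_aw
  intro n x
  simp only [Pi.mul_apply, Pi.pow_apply]
  rw [norm_mul, norm_pow, Real.norm_eq_abs, Real.norm_eq_abs, abs_of_pos (aw_pos n)]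
  calc aw n * |Real.sin x| ^ (2*n) ≤ aw n * 1 := by
        apply mul_le_mul_of_nonneg_left
          (pow_le_one₀ (abs_nonneg _) (Real.abs_sin_le_one x)) (aw_pos n).le
    _ = aw n := mul_one _

lemma FF_eq_int {x : ℝ} (hx0 : 0 ≤ x) (hx1 : x < 1) :
    FF x = ∫ t in (0:ℝ)..x, 1 / Real.sqrt (1 - t ^ 4) := by
  have hcont : ∀ n : ℕ, Continuous (fun t : ℝ => wal n * t ^ (4 * n)) := fun n =>
    continuous_const.mul (continuous_pow _)
  have hterm : ∀ n : ℕ, ∫ t in Set.Ioc (0:ℝ) x, wal n * t ^ (4 * n)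
      = aw n * x ^ (4 * n + 1) := by
    intro n
    rw [← intervalIntegral.integral_of_le hx0, intervalIntegral.integral_const_mul,
      integral_pow]
    rw [aw]
    have : ((4 * n : ℕ) : ℝ) + 1 = 4 * (n:ℝ) + 1 := by push_cast; ring
    rw [this]
    have h4 : (4 * (n:ℝ) + 1) ≠ 0 := by positivity
    field_simp
    simp
  have hs : Summable (fun n => ∫ t in Set.Ioc (0:ℝ) x, wal n * t ^ (4 * n)) := by
    simp_rw [hterm]
    apply Summable.of_nonneg_of_le
      (fun n => mul_nonneg (aw_pos n).le (pow_nonneg hx0 _)) (fun n => ?_) summable_aw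
    calc aw n * x ^ (4*n+1) ≤ aw n * 1 :=
          mul_le_mul_of_nonneg_left (pow_le_one₀ hx0 hx1.le) (aw_pos n).le
      _ = aw n := mul_one _
  have hinter := interchange (f := fun n t => wal n * t ^ (4 * n)) measurableSet_Ioc
    (fun n => (hcont n).aestronglyMeasurable)
    (fun n t ht => mul_nonneg (wal_pos n).le (pow_nonneg ht.1.le _))
    (fun n => (hcont n).integrableOn_Ioc) hs
  have hpt : ∀ t ∈ Set.Ioc (0:ℝ) x, (∑' n, wal n * t ^ (4 * n)) = 1 / Real.sqrt (1 - t ^ 4) := by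
    intro t ht
    have ht4 : t ^ 4 < 1 :=
      pow_lt_one₀ ht.1.le (lt_of_le_of_lt ht.2 hx1) (by norm_num)
    have hb := binomial (y := t ^ 4) (by positivity) ht4
    have : (fun n => wal n * (t ^ 4) ^ n) = fun n => wal n * t ^ (4 * n) := by
      funext n; rw [← pow_mul]
    rw [this] at hb
    exact hb.tsum_eq
  rw [intervalIntegral.integral_of_le hx0, ← MeasureTheory.setIntegral_congr_fun
    measurableSet_Ioc hpt, hinter, FF]
  exact (tsum_congr hterm).symm

lemma FF_one : FF 1 = ∑' n, aw n := by simp [FF]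

lemma FF_zero : FF 0 = 0 := by simp [FF]

lemma pow4_lt_one {t : ℝ} (ht : t ∈ Ioo (-1:ℝ) 1) : t ^ 4 < 1 := by
  have h := abs_lt.2 ⟨ht.1, ht.2⟩
  calc t ^ 4 = |t| ^ 4 := by rw [pow_abs, abs_of_nonneg (by positivity : (0:ℝ) ≤ t ^ 4)]
    _ < 1 := pow_lt_one₀ (abs_nonneg t) h (by norm_num)

lemma sqrtg_contOn : ContinuousOn (fun t : ℝ => 1 / Real.sqrt (1 - t ^ 4)) (Ioo (-1:ℝ) 1) := by
  apply ContinuousOn.div continuousOn_const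
    ((continuousOn_const.sub (continuousOn_pow 4)).sqrt)
  intro t ht
  exact (Real.sqrt_pos.2 (by show 0 < 1 - t ^ 4; linarith [pow4_lt_one ht])).ne'

lemma FF_hasDeriv {x : ℝ} (hx : x ∈ Ioo (0:ℝ) 1) :
    HasDerivAt FF (1 / Real.sqrt (1 - x ^ 4)) x := by
  set g : ℝ → ℝ := fun t => 1 / Real.sqrt (1 - t ^ 4) with hg
  have hxI : x ∈ Ioo (-1:ℝ) 1 := ⟨by linarith [hx.1], hx.2⟩
  have hint : IntervalIntegrable g MeasureTheory.volume 0 x := by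
    apply ContinuousOn.intervalIntegrable
    apply sqrtg_contOn.mono
    rw [uIcc_of_le hx.1.le]
    intro t ht
    exact ⟨by linarith [ht.1], lt_of_le_of_lt ht.2 hx.2⟩
  have hmeas : StronglyMeasurableAtFilter g (nhds x) MeasureTheory.volume :=
    sqrtg_contOn.stronglyMeasurableAtFilter isOpen_Ioo x hxI
  have hcontAt : ContinuousAt g x :=
    sqrtg_contOn.continuousAt (IsOpen.mem_nhds isOpen_Ioo hxI)
  have hP := intervalIntegral.integral_hasDerivAt_right hint hmeas hcontAt
  apply hP.congr_of_eventuallyEq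
  filter_upwards [IsOpen.mem_nhds isOpen_Ioo hx] with u hu
  exact FF_eq_int hu.1.le hu.2

lemma FF_sqrt {s : ℝ} (hs : 0 ≤ s) :
    FF (Real.sqrt s) = Real.sqrt s * ∑' n, aw n * s ^ (2 * n) := by
  rw [FF, ← tsum_mul_left]
  apply tsum_congr
  intro n
  have h1 : Real.sqrt s ^ (4 * n + 1) = Real.sqrt s * s ^ (2 * n) := by
    rw [pow_succ']
    congr 1
    rw [show 4 * n = 2 * (2 * n) by ring, pow_mul, Real.sq_sqrt hs]
  rw [h1]; ring

lemma mainFTC : ∫ θ in (0:ℝ)..(π/2), Psi θ = FF 1 ^ 2 := by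
  have hπ2 : (0:ℝ) ≤ π / 2 := by linarith [pi_pos]
  have hmap : ∀ θ : ℝ, Real.sqrt (Real.sin θ) ∈ Icc (-1:ℝ) 1 := by
    intro θ
    constructor
    · linarith [Real.sqrt_nonneg (Real.sin θ)]
    · exact Real.sqrt_le_one.2 (Real.sin_le_one θ)
  have hcont : ContinuousOn (fun θ => FF (Real.sqrt (Real.sin θ)) ^ 2) (Icc 0 (π/2)) := by
    apply ContinuousOn.pow
    apply FF_contOn.comp ((Real.continuous_sqrt.comp Real.continuous_sin).continuousOn)
    intro θ _
    exact hmap θ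
  have hderiv : ∀ θ ∈ Ioo (0:ℝ) (π/2),
      HasDerivAt (fun θ => FF (Real.sqrt (Real.sin θ)) ^ 2) (Psi θ) θ := by
    intro θ hθ
    have hsinpos : 0 < Real.sin θ :=
      Real.sin_pos_of_pos_of_lt_pi hθ.1 (by linarith [hθ.2, pi_pos])
    have hsinlt : Real.sin θ < 1 := by
      have := Real.strictMonoOn_sin (a := θ) (b := π/2)
        ⟨by linarith [hθ.1, pi_pos], hθ.2.le⟩ ⟨by linarith [pi_pos], le_refl _⟩ hθ.2
      rwa [Real.sin_pi_div_two] at this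
    set x := Real.sqrt (Real.sin θ) with hxdef
    have hx0 : 0 < x := Real.sqrt_pos.2 hsinpos
    have hx1 : x < 1 := by
      nlinarith [Real.sq_sqrt hsinpos.le, hx0]
    have hcospos : 0 < Real.cos θ :=
      Real.cos_pos_of_mem_Ioo ⟨by linarith [hθ.1, pi_pos], hθ.2⟩
    have h1 : HasDerivAt Real.sin (Real.cos θ) θ := Real.hasDerivAt_sin θ
    have h2 : HasDerivAt Real.sqrt (1 / (2 * x)) (Real.sin θ) :=
      Real.hasDerivAt_sqrt hsinpos.ne'
    have h4 : HasDerivAt (fun θ => Real.sqrt (Real.sin θ)) (1 / (2 * x) * Real.cos θ) θ :=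
      h2.comp θ h1
    have h3 : HasDerivAt FF (1 / Real.sqrt (1 - x ^ 4)) x := FF_hasDeriv ⟨hx0, hx1⟩
    have h5 : HasDerivAt (fun θ => FF (Real.sqrt (Real.sin θ)))
        (1 / Real.sqrt (1 - x ^ 4) * (1 / (2 * x) * Real.cos θ)) θ := (h3.comp θ h4 :)
    have h6 := h5.pow 2
    have hx4 : x ^ 4 = Real.sin θ ^ 2 := by
      rw [hxdef, show (4:ℕ) = 2 * 2 by norm_num, pow_mul, Real.sq_sqrt hsinpos.le]
    have hsqcos : Real.sqrt (1 - x ^ 4) = Real.cos θ := by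
      rw [hx4, ← Real.cos_sq']
      exact Real.sqrt_sq hcospos.le
    have hFFx : FF x = x * Psi θ := by rw [hxdef, FF_sqrt hsinpos.le, Psi]
    refine h6.congr_deriv (Eq.symm ?_)
    rw [hsqcos, hFFx, pow_one]
    field_simp
    ring
  have hint : IntervalIntegrable Psi MeasureTheory.volume 0 (π/2) :=
    Psi_cont.intervalIntegrable _ _
  rw [intervalIntegral.integral_eq_sub_of_hasDeriv_right_of_le hπ2 hcont
    (fun θ hθ => (hderiv θ hθ).hasDerivWithinAt) hint]
  · rw [Real.sin_pi_div_two, Real.sqrt_one, Real.sin_zero, Real.sqrt_zero, FF_zero]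
    ring

lemma S_eq : ∑' n : ℕ, (1 / (4 * (n : ℝ) + 1)) * wal n ^ 2 = (2/π) * FF 1 ^ 2 := by
  have hπ2 : (0:ℝ) ≤ π / 2 := by linarith [pi_pos]
  have hcont : ∀ n : ℕ, Continuous (fun θ : ℝ => aw n * Real.sin θ ^ (2 * n)) := fun n =>
    continuous_const.mul ((Real.continuous_sin).pow _)
  have hterm : ∀ n : ℕ, ∫ θ in Set.Ioc (0:ℝ) (π/2), aw n * Real.sin θ ^ (2*n)
      = (π/2) * (aw n * wal n) := by
    intro n
    rw [← intervalIntegral.integral_of_le hπ2, intervalIntegral.integral_const_mul,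
      wallis_half]
    ring
  have hs : Summable (fun n => ∫ θ in Set.Ioc (0:ℝ) (π/2), aw n * Real.sin θ ^ (2*n)) := by
    simp_rw [hterm]
    apply Summable.mul_left
    apply Summable.of_nonneg_of_le
      (fun n => mul_nonneg (aw_pos n).le (wal_pos n).le) (fun n => ?_) summable_aw
    calc aw n * wal n ≤ aw n * 1 := mul_le_mul_of_nonneg_left (wal_le_one n) (aw_pos n).le
      _ = aw n := mul_one _
  have hinter := interchange (f := fun n θ => aw n * Real.sin θ ^ (2*n)) measurableSet_Ioc
    (fun n => (hcont n).aestronglyMeasurable)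
    (fun n θ hθ => mul_nonneg (aw_pos n).le (pow_nonneg
      (Real.sin_nonneg_of_nonneg_of_le_pi hθ.1.le (by linarith [pi_pos, hθ.2])) _))
    (fun n => (hcont n).integrableOn_Ioc) hs
  have hPsi : ∫ θ in Set.Ioc (0:ℝ) (π/2), Psi θ = FF 1 ^ 2 := by
    rw [← intervalIntegral.integral_of_le hπ2]
    exact mainFTC
  have hPsi' : ∫ θ in Set.Ioc (0:ℝ) (π/2), ∑' n, aw n * Real.sin θ ^ (2*n) = FF 1 ^ 2 := hPsi
  calc ∑' n : ℕ, (1 / (4 * (n : ℝ) + 1)) * wal n ^ 2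
      = ∑' n : ℕ, (2/π) * ((π/2) * (aw n * wal n)) := by
        apply tsum_congr
        intro n
        rw [aw]
        have hπ : π ≠ 0 := pi_ne_zero
        have h4 : (4 * (n:ℝ) + 1) ≠ 0 := by positivity
        field_simp
    _ = (2/π) * ∑' n : ℕ, (π/2) * (aw n * wal n) := tsum_mul_left
    _ = (2/π) * ∑' n : ℕ, ∫ θ in Set.Ioc (0:ℝ) (π/2), aw n * Real.sin θ ^ (2*n) := by
        rw [tsum_congr (fun n => (hterm n).symm)]
    _ = (2/π) * ∫ θ in Set.Ioc (0:ℝ) (π/2), ∑' n, aw n * Real.sin θ ^ (2*n) := by rw [hinter]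
    _ = (2/π) * FF 1 ^ 2 := by rw [hPsi']

lemma rpow_contOn (r : ℝ) : ContinuousOn (fun x : ℝ => x ^ r) (Ioo (0:ℝ) 1) := by
  intro x hx
  exact ((Real.continuousAt_rpow_const x r (Or.inl hx.1.ne'))).continuousWithinAt

lemma beta_series : ∫ x in Set.Ioo (0:ℝ) 1, x ^ (-(3:ℝ)/4) * (1 - x) ^ (-(1:ℝ)/2)
    = 4 * FF 1 := by
  have hterm : ∀ n : ℕ, ∫ x in Set.Ioo (0:ℝ) 1, wal n * x ^ ((n:ℝ) - 3/4)
      = 4 * aw n := by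
    intro n
    have hr : (-1:ℝ) < (n:ℝ) - 3/4 := by
      have : (0:ℝ) ≤ (n:ℝ) := Nat.cast_nonneg n
      linarith
    rw [← MeasureTheory.integral_Ioc_eq_integral_Ioo,
      ← intervalIntegral.integral_of_le zero_le_one,
      intervalIntegral.integral_const_mul, integral_rpow (Or.inl hr)]
    rw [Real.one_rpow, Real.zero_rpow (by linarith : (n:ℝ) - 3/4 + 1 ≠ 0)]
    rw [aw, wal]
    have h1 : (n:ℝ) - 3/4 + 1 = (4 * (n:ℝ) + 1) / 4 := by ring
    rw [h1]
    have h2 : (4 * (n:ℝ) + 1) ≠ 0 := by positivity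
    field_simp
    ring
  have hmeas : ∀ n : ℕ, AEStronglyMeasurable (fun x : ℝ => wal n * x ^ ((n:ℝ) - 3/4))
      (MeasureTheory.volume.restrict (Set.Ioo (0:ℝ) 1)) :=
    fun n => (continuousOn_const.mul (rpow_contOn _)).aestronglyMeasurable measurableSet_Ioo
  have hint : ∀ n : ℕ, MeasureTheory.IntegrableOn (fun x : ℝ => wal n * x ^ ((n:ℝ) - 3/4))
      (Set.Ioo (0:ℝ) 1) := by
    intro n
    have hr : (-1:ℝ) < (n:ℝ) - 3/4 := by
      have : (0:ℝ) ≤ (n:ℝ) := Nat.cast_nonneg n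
      linarith
    have := (intervalIntegrable_rpow' (a := 0) (b := 1) hr).const_mul (wal n)
    rw [intervalIntegrable_iff_integrableOn_Ioo_of_le zero_le_one] at this
    exact this
  have hs : Summable (fun n => ∫ x in Set.Ioo (0:ℝ) 1, wal n * x ^ ((n:ℝ) - 3/4)) := by
    simp_rw [hterm]
    exact summable_aw.mul_left 4
  have hinter := interchange (f := fun n x => wal n * x ^ ((n:ℝ) - 3/4)) measurableSet_Ioo
    hmeas
    (fun n x hx => mul_nonneg (wal_pos n).le (Real.rpow_nonneg hx.1.le _))
    hint hs
  have hpt : ∀ x ∈ Set.Ioo (0:ℝ) 1,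
      x ^ (-(3:ℝ)/4) * (1 - x) ^ (-(1:ℝ)/2) = ∑' n, wal n * x ^ ((n:ℝ) - 3/4) := by
    intro x hx
    have hx0 : 0 < x := hx.1
    have hx1 : x < 1 := hx.2
    have h1x : 0 < 1 - x := by linarith
    have hb := (binomial hx0.le hx1).mul_right (x ^ (-(3:ℝ)/4))
    have heq : (fun n => wal n * x ^ n * x ^ (-(3:ℝ)/4))
        = fun n => wal n * x ^ ((n:ℝ) - 3/4) := by
      funext n
      rw [mul_assoc, ← Real.rpow_natCast x n, ← Real.rpow_add hx0]
      ring_nf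
    rw [heq] at hb
    rw [hb.tsum_eq]
    have h2 : (1 - x) ^ (-(1:ℝ)/2) = 1 / Real.sqrt (1 - x) := by
      rw [Real.sqrt_eq_rpow, one_div, ← Real.rpow_neg h1x.le]
      norm_num
    rw [h2]
    ring
  rw [MeasureTheory.setIntegral_congr_fun measurableSet_Ioo hpt, hinter,
    tsum_congr hterm, tsum_mul_left, FF_one]

lemma beta_complex : Real.Gamma (1/4) * Real.Gamma (1/2)
    = Real.Gamma (3/4) * ∫ x in Set.Ioo (0:ℝ) 1, x ^ (-(3:ℝ)/4) * (1 - x) ^ (-(1:ℝ)/2) := by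
  have h := Complex.Gamma_mul_Gamma_eq_betaIntegral (s := ((1/4:ℝ):ℂ)) (t := ((1/2:ℝ):ℂ))
    (by rw [Complex.ofReal_re]; norm_num) (by rw [Complex.ofReal_re]; norm_num)
  have hst : ((1/4:ℝ):ℂ) + ((1/2:ℝ):ℂ) = ((3/4:ℝ):ℂ) := by push_cast; norm_num
  rw [hst] at h
  have hbeta : Complex.betaIntegral ((1/4:ℝ):ℂ) ((1/2:ℝ):ℂ)
      = ((∫ x in (0:ℝ)..1, x ^ (-(3:ℝ)/4) * (1 - x) ^ (-(1:ℝ)/2) : ℝ) : ℂ) := by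
    rw [Complex.betaIntegral, ← intervalIntegral.integral_ofReal]
    apply intervalIntegral.integral_congr
    intro x hx
    rw [uIcc_of_le zero_le_one] at hx
    have h1x : (0:ℝ) ≤ 1 - x := by linarith [hx.2]
    beta_reduce
    rw [Complex.ofReal_mul, Complex.ofReal_cpow hx.1, Complex.ofReal_cpow h1x]
    rw [Complex.ofReal_sub, Complex.ofReal_one]
    congr 1
    · congr 1
      push_cast
      norm_num
    · congr 1
      push_cast
      norm_num
  rw [hbeta] at h
  rw [intervalIntegral.integral_of_le zero_le_one,
    MeasureTheory.integral_Ioc_eq_integral_Ioo] at h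
  rw [← Complex.ofReal_inj]
  push_cast [← Complex.Gamma_ofReal]
  convert h using 2 <;> norm_num

lemma FF1_val : FF 1 = Real.Gamma (1/4) * Real.Gamma (1/2) / (4 * Real.Gamma (3/4)) := by
  have h := beta_complex
  rw [beta_series] at h
  have hΓ : 0 < Real.Gamma (3/4) := Real.Gamma_pos_of_pos (by norm_num)
  field_simp
  linarith [h]

theorem stmt_7 :
    ∑' n : ℕ, (1 / (4 * (n : ℝ) + 1)) * ((Nat.centralBinom n : ℝ) / 4 ^ n) ^ 2 =
      Real.Gamma (1 / 4) ^ 4 / (16 * Real.pi ^ 2) := by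
  have hS : ∑' n : ℕ, (1 / (4 * (n : ℝ) + 1)) * ((Nat.centralBinom n : ℝ) / 4 ^ n) ^ 2
      = (2/π) * FF 1 ^ 2 := S_eq
  rw [hS, FF1_val, Real.Gamma_one_half_eq]
  have hrefl := Real.Gamma_mul_Gamma_one_sub (1/4)
  rw [show (1:ℝ) - 1/4 = 3/4 by norm_num, show π * (1/4) = π/4 by ring,
    Real.sin_pi_div_four] at hrefl
  have hG : 0 < Real.Gamma (1/4) := Real.Gamma_pos_of_pos (by norm_num)
  have hC : 0 < Real.Gamma (3/4) := Real.Gamma_pos_of_pos (by norm_num)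
  have hπ : 0 < π := pi_pos
  have hsq2 : Real.sqrt 2 ^ 2 = 2 := Real.sq_sqrt (by norm_num)
  have hsqπ : Real.sqrt π ^ 2 = π := Real.sq_sqrt hπ.le
  have hs2pos : 0 < Real.sqrt 2 := Real.sqrt_pos.2 (by norm_num)
  have hGC : Real.Gamma (1/4) * Real.Gamma (3/4) = Real.sqrt 2 * π := by
    rw [hrefl, div_eq_iff (by positivity : Real.sqrt 2 / 2 ≠ 0)]
    nlinarith [hsq2]
  have hCval : Real.Gamma (3/4) = Real.sqrt 2 * π / Real.Gamma (1/4) := by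
    field_simp
    linarith [hGC]
  rw [hCval]
  rw [div_pow, mul_pow, mul_pow, hsqπ, div_pow, mul_pow, hsq2]
  field_simp
  ring
end
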